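/- Assume (‖ψ_j‖_{W^{1,∞}})_{j ∈ ℕ} ∈ ℓ_p(ℕ) for some 0 < p ≤ 1. Choose λ > 1, j_0 so that (λ-1)Σ_{j ≤ j_0} ‖ψ_j‖_{W^{1,∞}} ≤ r/6 and Σ_{j > j_0} ‖ψ_j‖_{W^{1,∞}} ≤ r/(12 e^q), put d_j = (4 e^q / r)‖ψ_j‖_{W^{1,∞}} for j > j_0, and define σ̃_s^{-1} = (Π_{j ≤ j_0} ((λ+1)/(2λ))^{s_j}) · Π_{j > j_0} (|s_F| d_j / s_j)^{s_j}, where s_F is the restriction of s to indices j > j_0. Then (σ̃_s^{-1})_{s ∈ F} ∈ ℓ_p(F). -/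

import Mathlib

open Finset

namespace St14




/-- total degree of a finitely supported multi-index -/
def deg (t : ℕ →₀ ℕ) : ℕ := ∑ j ∈ t.support, t j

lemma apply_le_deg (t : ℕ →₀ ℕ) (j : ℕ) : t j ≤ deg t := by
  by_cases h : j ∈ t.support
  · exact Finset.single_le_sum (fun i _ => Nat.zero_le _) h
  · simp [Finsupp.notMem_support_iff.mp h]

lemma deg_eq_sum_subset {t : ℕ →₀ ℕ} {E : Finset ℕ} (h : t.support ⊆ E) :
    deg t = ∑ j ∈ E, t j :=
  Finset.sum_subset h (fun j _ hj => Finsupp.notMem_support_iff.mp hj)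

lemma deg_erase (a : ℕ) (t : ℕ →₀ ℕ) : deg t = t a + deg (t.erase a) := by
  by_cases h : a ∈ t.support
  · unfold deg
    rw [Finsupp.support_erase, ← Finset.add_sum_erase _ _ h]
    congr 1
    refine Finset.sum_congr rfl (fun j hj => ?_)
    rw [Finsupp.erase_ne (Finset.ne_of_mem_erase hj)]
  · rw [Finsupp.notMem_support_iff.mp h, Finsupp.erase_of_notMem_support h, zero_add]

lemma geom_le (κ : ℝ) (h0 : 0 ≤ κ) (h1 : κ < 1) (m : ℕ) :
    ∑ i ∈ range m, κ ^ i ≤ (1 - κ)⁻¹ := by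
  rw [geom_sum_eq h1.ne]
  have h2 : (κ ^ m - 1) / (κ - 1) = (1 - κ ^ m) * (1 - κ)⁻¹ := by
    rw [div_eq_mul_inv, ← neg_neg (κ - 1), inv_neg, mul_neg, ← neg_mul]
    ring_nf
  rw [h2]
  exact mul_le_of_le_one_left (inv_nonneg.2 (by linarith)) (by nlinarith [pow_nonneg h0 m])

lemma sum_le_mul {α β γ : Type*} [DecidableEq β] [DecidableEq γ]
    (S : Finset α) (e₁ : α → β) (e₂ : α → γ)
    (f : β → ℝ) (g : γ → ℝ) (hf : ∀ b, 0 ≤ f b) (hg : ∀ c, 0 ≤ g c)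
    (hinj : ∀ s ∈ S, ∀ s' ∈ S, e₁ s = e₁ s' → e₂ s = e₂ s' → s = s') :
    ∑ s ∈ S, f (e₁ s) * g (e₂ s) ≤ (∑ b ∈ S.image e₁, f b) * (∑ c ∈ S.image e₂, g c) := by
  classical
  have h1 : ∑ s ∈ S, f (e₁ s) * g (e₂ s)
      = ∑ y ∈ S.image (fun s => (e₁ s, e₂ s)), f y.1 * g y.2 := by
    rw [Finset.sum_image]
    intro x hx y hy h
    exact hinj x hx y hy (congrArg Prod.fst h) (congrArg Prod.snd h)
  rw [h1, Finset.sum_mul_sum]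
  rw [← Finset.sum_product']
  apply Finset.sum_le_sum_of_subset_of_nonneg
  · intro y hy
    simp only [Finset.mem_image] at hy
    obtain ⟨s, hs, rfl⟩ := hy
    exact Finset.mem_product.2 ⟨Finset.mem_image_of_mem _ hs, Finset.mem_image_of_mem _ hs⟩
  · intro y _ _
    exact mul_nonneg (hf _) (hg _)

lemma box (κ : ℝ) (h0 : 0 ≤ κ) (h1 : κ < 1) (E : Finset ℕ) :
    ∀ T : Finset (ℕ →₀ ℕ), (∀ t ∈ T, t.support ⊆ E) →
      ∑ t ∈ T, κ ^ deg t ≤ (1 - κ)⁻¹ ^ E.card := by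
  classical
  induction E using Finset.induction with
  | empty =>
    intro T hT
    have hT' : T ⊆ {0} := by
      intro t ht
      simp only [Finset.mem_singleton]
      ext j
      by_contra h
      exact absurd (hT t ht (Finsupp.mem_support_iff.2 (by simpa using h))) (by simp)
    calc ∑ t ∈ T, κ ^ deg t ≤ ∑ t ∈ ({0} : Finset (ℕ →₀ ℕ)), κ ^ deg t := by
          apply Finset.sum_le_sum_of_subset_of_nonneg hT'
          intro t _ _; exact pow_nonneg h0 _
      _ = 1 := by simp [deg]
      _ ≤ (1 - κ)⁻¹ ^ (∅ : Finset ℕ).card := by simp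
  | @insert a E' ha ih =>
    intro T hT
    have key : ∀ t ∈ T, κ ^ deg t = κ ^ (t a) * κ ^ deg (t.erase a) := by
      intro t _; rw [← pow_add, ← deg_erase]
    rw [Finset.sum_congr rfl key]
    have step := sum_le_mul T (fun t => t a) (fun t => t.erase a)
      (fun n => κ ^ n) (fun u => κ ^ deg u)
      (fun _ => pow_nonneg h0 _) (fun _ => pow_nonneg h0 _)
      (by
        intro s hs s' hs' h1' h2'
        rw [← Finsupp.single_add_erase a s, ← Finsupp.single_add_erase a s', h1', h2'])
    refine step.trans ?_
    have hb1 : ∑ n ∈ T.image (fun t => t a), κ ^ n ≤ (1 - κ)⁻¹ := by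
      have hsub : T.image (fun t => t a) ⊆ range (T.sup deg + 1) := by
        intro n hn
        simp only [Finset.mem_image] at hn
        obtain ⟨t, ht, rfl⟩ := hn
        exact Finset.mem_range.2 (Nat.lt_succ_of_le ((apply_le_deg t a).trans
          (Finset.le_sup ht)))
      exact (Finset.sum_le_sum_of_subset_of_nonneg hsub
        (fun _ _ _ => pow_nonneg h0 _)).trans (geom_le κ h0 h1 _)
    have hb2 : ∑ u ∈ T.image (fun t => t.erase a), κ ^ deg u ≤ (1 - κ)⁻¹ ^ E'.card := by
      apply ih
      intro u hu
      simp only [Finset.mem_image] at hu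
      obtain ⟨t, ht, rfl⟩ := hu
      rw [Finsupp.support_erase]
      intro j hj
      have hj' := hT t ht (Finset.mem_of_mem_erase hj)
      rcases Finset.mem_insert.1 hj' with h | h
      · exact absurd h (Finset.ne_of_mem_erase hj)
      · exact h
    calc _ ≤ (1 - κ)⁻¹ * (1 - κ)⁻¹ ^ E'.card := by
          apply mul_le_mul hb1 hb2 (Finset.sum_nonneg fun _ _ => pow_nonneg h0 _)
          exact inv_nonneg.2 (by linarith)
      _ = (1 - κ)⁻¹ ^ (insert a E').card := by
          rw [Finset.card_insert_of_notMem ha, pow_succ]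
          ring



lemma jensen' (S : Finset ℕ) (t : ℕ → ℕ) (d : ℕ → ℝ) (hd : ∀ j ∈ S, 0 ≤ d j)
    (ht : ∀ j ∈ S, t j ≠ 0) (n : ℕ) (hn0 : n ≠ 0) (hn : ∑ j ∈ S, t j = n) :
    ∏ j ∈ S, ((n : ℝ) * d j / t j) ^ t j ≤ (∑ j ∈ S, d j) ^ n := by
  have hz : ∀ j ∈ S, (0:ℝ) ≤ (n : ℝ) * d j / t j := fun j hj =>
    div_nonneg (mul_nonneg (Nat.cast_nonneg n) (hd j hj)) (Nat.cast_nonneg _)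
  have key := Real.geom_mean_le_arith_mean_weighted S (fun j => (t j : ℝ) / n)
    (fun j => (n : ℝ) * d j / t j)
    (fun j _ => div_nonneg (Nat.cast_nonneg _) (Nat.cast_nonneg _))
    (by
      rw [← Finset.sum_div]
      rw [div_eq_one_iff_eq (by exact_mod_cast hn0)]
      exact_mod_cast hn)
    hz
  have hrhs : ∑ j ∈ S, ((t j : ℝ) / n) * ((n : ℝ) * d j / t j) = ∑ j ∈ S, d j := by
    refine Finset.sum_congr rfl (fun j hj => ?_)
    have h1 : (t j : ℝ) ≠ 0 := Nat.cast_ne_zero.2 (ht j hj)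
    have h2 : (n : ℝ) ≠ 0 := Nat.cast_ne_zero.2 hn0
    field_simp
  rw [hrhs] at key
  have hprod : (∏ j ∈ S, ((n : ℝ) * d j / t j) ^ (((t j : ℝ)) / n)) ^ n
      = ∏ j ∈ S, ((n : ℝ) * d j / t j) ^ t j := by
    rw [← Real.rpow_natCast (∏ j ∈ S, ((n : ℝ) * d j / t j) ^ (((t j : ℝ)) / n)) n]
    rw [← Real.finset_prod_rpow S _ (fun j hj => Real.rpow_nonneg (hz j hj) _) _]
    refine Finset.prod_congr rfl (fun j hj => ?_)
    rw [← Real.rpow_natCast ((n : ℝ) * d j / t j) (t j), ← Real.rpow_mul (hz j hj)]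
    congr 1
    field_simp
  rw [← hprod]
  exact pow_le_pow_left₀ (Finset.prod_nonneg fun j hj => Real.rpow_nonneg (hz j hj) _) key n

lemma two_point (a b : ℕ) :
    ((a : ℝ) + b) ^ (a + b) ≤ 2 ^ (a + b) * (a : ℝ) ^ a * (b : ℝ) ^ b := by
  rcases Nat.eq_zero_or_pos a with ha | ha
  · subst ha
    simp only [Nat.cast_zero, zero_add, pow_zero, one_mul, mul_one]
    rw [mul_comm]
    exact le_mul_of_one_le_right (pow_nonneg (Nat.cast_nonneg b) b) (one_le_pow₀ one_le_two)
  rcases Nat.eq_zero_or_pos b with hb | hb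
  · subst hb
    simp only [Nat.cast_zero, add_zero, pow_zero, mul_one]
    exact le_mul_of_one_le_right (pow_nonneg (Nat.cast_nonneg a) a) (one_le_pow₀ one_le_two) |>.trans_eq (by ring)
  set n := a + b with hnd
  have hkey := jensen' {0, 1} (fun j => if j = 0 then a else b) (fun _ => (1/2 : ℝ))
    (fun _ _ => by norm_num) (by
      intro j hj
      rcases Finset.mem_insert.1 hj with h | h
      · simp [h, ha.ne']
      · simp only [Finset.mem_singleton] at h; simp [h, hb.ne'])
    n (by positivity) (by simp [Finset.sum_pair (by norm_num : (0:ℕ) ≠ 1)]; exact hnd.symm)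
  rw [Finset.prod_pair (by norm_num : (0:ℕ) ≠ 1), Finset.sum_pair (by norm_num : (0:ℕ) ≠ 1)] at hkey
  simp only [if_pos rfl, if_neg (by norm_num : (1:ℕ) ≠ 0)] at hkey
  norm_num at hkey
  -- hkey : (n * (1/2) / a) ^ a * (n * (1/2) / b) ^ b ≤ 1  (roughly)
  have ha' : (0:ℝ) < a := by exact_mod_cast ha
  have hb' : (0:ℝ) < b := by exact_mod_cast hb
  have h2 : ((n:ℝ) / (2 * a)) ^ a * ((n:ℝ) / (2 * b)) ^ b ≤ 1 := by
    convert hkey using 3 <;> ring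
  rw [div_pow, div_pow, div_mul_div_comm, div_le_one (by positivity)] at h2
  rw [mul_pow, mul_pow] at h2
  have hcast : ((a:ℝ) + b) ^ (a + b) = (n : ℝ) ^ a * (n : ℝ) ^ b := by
    rw [← pow_add]; congr 1; push_cast [hnd]; ring
  rw [hcast, pow_add]
  nlinarith [pow_pos ha' a, pow_pos hb' b, pow_pos (by norm_num : (0:ℝ) < 2) a,
    pow_pos (by norm_num : (0:ℝ) < 2) b]

lemma pow_self_le (n : ℕ) : ((n : ℝ)) ^ n ≤ Real.exp 1 ^ n * (n.factorial : ℝ) := by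
  have h := Real.sum_le_exp_of_nonneg (x := (n : ℝ)) (Nat.cast_nonneg n) (n + 1)
  have h1 : (n : ℝ) ^ n / (n.factorial : ℝ) ≤ Real.exp n := by
    refine le_trans ?_ h
    exact Finset.single_le_sum (f := fun i => (n:ℝ)^i / (i.factorial : ℝ))
      (fun i _ => by positivity) (Finset.self_mem_range_succ n)
  have h2 : Real.exp (n : ℝ) = Real.exp 1 ^ n := by
    rw [← Real.exp_nat_mul]; norm_num
  rw [div_le_iff₀ (by positivity : (0:ℝ) < (n.factorial : ℝ))] at h1
  rw [h2] at h1
  linarith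

lemma deg_eq_zero {v : ℕ →₀ ℕ} (h : deg v = 0) : v = 0 := by
  ext j
  exact Nat.le_zero.1 (h ▸ apply_le_deg v j)

lemma prod_factor (c : ℝ) (d : ℕ → ℝ) (v : ℕ →₀ ℕ) :
    ∏ j ∈ v.support, (c * d j / v j) ^ v j
      = c ^ deg v * ∏ j ∈ v.support, (d j / v j) ^ v j := by
  rw [deg, ← Finset.prod_pow_eq_pow_sum, ← Finset.prod_mul_distrib]
  refine Finset.prod_congr rfl fun j hj => ?_
  rw [← mul_pow]
  congr 1
  ring

/-- splitting of the product along a partition of the index set -/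
lemma split_le (d : ℕ → ℝ) (hd : ∀ j, 0 ≤ d j) (P : ℕ → Prop) [DecidablePred P]
    (u : ℕ →₀ ℕ) :
    ∏ j ∈ u.support, ((deg u : ℝ) * d j / u j) ^ u j
      ≤ (∏ j ∈ (u.filter P).support,
            ((2 * (deg (u.filter P) : ℝ)) * d j / (u.filter P) j) ^ (u.filter P) j) *
        ∏ j ∈ (u.filter fun j => ¬ P j).support,
            ((2 * (deg (u.filter fun j => ¬ P j) : ℝ)) * d j
              / (u.filter fun j => ¬ P j) j) ^ (u.filter fun j => ¬ P j) j := by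
  classical
  set v := u.filter P with hv
  set w := u.filter (fun j => ¬ P j) with hw
  have hvs : v.support = u.support.filter P := by
    simp [hv, Finsupp.support_filter]
  have hws : w.support = u.support.filter (fun j => ¬ P j) := by
    simp [hw, Finsupp.support_filter]
  have hva : ∀ j ∈ v.support, v j = u j := by
    intro j hj; rw [hvs, Finset.mem_filter] at hj
    exact Finsupp.filter_apply_pos _ _ hj.2
  have hwa : ∀ j ∈ w.support, w j = u j := by
    intro j hj; rw [hws, Finset.mem_filter] at hj
    exact Finsupp.filter_apply_pos _ _ hj.2
  have hdisj : Disjoint v.support w.support := by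
    rw [hvs, hws]
    exact Finset.disjoint_filter_filter_not _ _ _
  have hunion : u.support = v.support ∪ w.support := by
    rw [hvs, hws, Finset.filter_union_filter_not_eq]
  have hdeg : deg u = deg v + deg w := by
    rw [deg, hunion, Finset.sum_union hdisj, deg, deg]
    congr 1
    · exact Finset.sum_congr rfl fun j hj => (hva j hj).symm
    · exact Finset.sum_congr rfl fun j hj => (hwa j hj).symm
  have hGu : ∏ j ∈ u.support, ((deg u : ℝ) * d j / u j) ^ u j
      = ((deg u : ℝ) ^ deg v * ∏ j ∈ v.support, (d j / v j) ^ v j)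
        * ((deg u : ℝ) ^ deg w * ∏ j ∈ w.support, (d j / w j) ^ w j) := by
    rw [hunion, Finset.prod_union hdisj]
    congr 1
    · rw [← prod_factor]
      refine Finset.prod_congr rfl fun j hj => by rw [hva j hj]
    · rw [← prod_factor]
      refine Finset.prod_congr rfl fun j hj => by rw [hwa j hj]
  have hA : (0:ℝ) ≤ ∏ j ∈ v.support, (d j / v j) ^ v j :=
    Finset.prod_nonneg fun j _ => pow_nonneg (div_nonneg (hd j) (Nat.cast_nonneg _)) _
  have hB : (0:ℝ) ≤ ∏ j ∈ w.support, (d j / w j) ^ w j :=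
    Finset.prod_nonneg fun j _ => pow_nonneg (div_nonneg (hd j) (Nat.cast_nonneg _)) _
  rw [hGu, prod_factor, prod_factor]
  have h2 : (deg u : ℝ) ^ deg v * (deg u : ℝ) ^ deg w
      ≤ (2 * (deg v : ℝ)) ^ deg v * (2 * (deg w : ℝ)) ^ deg w := by
    rw [← pow_add, ← hdeg]
    have hcast : (deg u : ℝ) = (deg v : ℝ) + (deg w : ℝ) := by
      rw [hdeg]; push_cast; ring
    rw [hcast, hdeg]
    refine (two_point _ _).trans_eq ?_
    rw [pow_add, mul_pow, mul_pow]; ring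
  calc (deg u : ℝ) ^ deg v * (∏ j ∈ v.support, (d j / v j) ^ v j)
        * ((deg u : ℝ) ^ deg w * ∏ j ∈ w.support, (d j / w j) ^ w j)
      = ((deg u : ℝ) ^ deg v * (deg u : ℝ) ^ deg w)
        * ((∏ j ∈ v.support, (d j / v j) ^ v j) * ∏ j ∈ w.support, (d j / w j) ^ w j) := by
        ring
    _ ≤ ((2 * (deg v : ℝ)) ^ deg v * (2 * (deg w : ℝ)) ^ deg w)
        * ((∏ j ∈ v.support, (d j / v j) ^ v j) * ∏ j ∈ w.support, (d j / w j) ^ w j) := by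
        exact mul_le_mul_of_nonneg_right h2 (mul_nonneg hA hB)
    _ = _ := by ring

/-- Jensen bound for the heavy (finite) part -/
lemma Gc_le (d : ℕ → ℝ) (hd : ∀ j, 0 ≤ d j) (v : ℕ →₀ ℕ) :
    ∏ j ∈ v.support, ((2 * (deg v : ℝ)) * d j / v j) ^ v j
      ≤ (∑ j ∈ v.support, 2 * d j) ^ deg v := by
  rcases Nat.eq_zero_or_pos (deg v) with h | h
  · rw [h, deg_eq_zero h]
    simp
  have heq : ∀ j ∈ v.support, ((2 * (deg v : ℝ)) * d j / v j) ^ v j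
      = ((deg v : ℝ) * (2 * d j) / v j) ^ v j := by
    intro j _; congr 2; ring
  rw [Finset.prod_congr rfl heq]
  exact jensen' v.support v (fun j => 2 * d j) (fun j _ => by linarith [hd j])
    (fun j hj => Finsupp.mem_support_iff.1 hj) (deg v) h.ne' rfl


lemma npow_rpow (x : ℝ) (hx : 0 ≤ x) (k : ℕ) (p : ℝ) :
    (x ^ k) ^ p = (x ^ p) ^ k := by
  rw [← Real.rpow_natCast x k, ← Real.rpow_mul hx, mul_comm, Real.rpow_mul hx,
    Real.rpow_natCast]

lemma Gc_le_mult (p : ℝ) (hp0 : 0 < p) (hp1 : p ≤ 1) (d : ℕ → ℝ) (hd : ∀ j, 0 ≤ d j)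
    (u : ℕ →₀ ℕ) (W : Finset ℕ) (hW : u.support ⊆ W) :
    (∏ j ∈ u.support, ((2 * (deg u : ℝ)) * d j / u j) ^ u j) ^ p
      ≤ (Nat.multinomial W u : ℝ) * ∏ j ∈ W, (((2 * Real.exp 1) * d j) ^ p) ^ u j := by
  classical
  set n := deg u with hn
  -- step 1 : the inner product is at most mult * ∏ (2 e d j) ^ u j
  have hP : (0:ℝ) < ∏ j ∈ u.support, ((u j : ℝ)) ^ u j := by
    apply Finset.prod_pos
    intro j hj
    have := Finsupp.mem_support_iff.1 hj
    positivity
  have hA0 : (0:ℝ) ≤ ∏ j ∈ u.support, ((n : ℝ) / u j) ^ u j :=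
    Finset.prod_nonneg fun j _ => pow_nonneg (div_nonneg (Nat.cast_nonneg _) (Nat.cast_nonneg _)) _
  have hAP : (∏ j ∈ u.support, ((n : ℝ) / u j) ^ u j)
      * (∏ j ∈ u.support, ((u j : ℝ)) ^ u j) = (n : ℝ) ^ n := by
    rw [← Finset.prod_mul_distrib]
    have : ∀ j ∈ u.support, ((n : ℝ) / u j) ^ u j * ((u j : ℝ)) ^ u j = (n:ℝ) ^ u j := by
      intro j hj
      rw [← mul_pow, div_mul_cancel₀]
      exact Nat.cast_ne_zero.2 (Finsupp.mem_support_iff.1 hj)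
    rw [Finset.prod_congr rfl this, Finset.prod_pow_eq_pow_sum]
    congr 1
  have hfact : ((n.factorial : ℕ) : ℝ)
      = (Nat.multinomial W u : ℝ) * ∏ j ∈ W, ((u j).factorial : ℝ) := by
    have hspec := Nat.multinomial_spec W u
    have hsum : ∑ j ∈ W, u j = n := (deg_eq_sum_subset hW).symm
    rw [hsum] at hspec
    rw [← hspec]
    push_cast
    ring
  have hfacP : ∏ j ∈ W, ((u j).factorial : ℝ) ≤ ∏ j ∈ u.support, ((u j : ℝ)) ^ u j := by
    have he : ∏ j ∈ W, ((u j).factorial : ℝ) = ∏ j ∈ u.support, ((u j).factorial : ℝ) := by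
      symm
      apply Finset.prod_subset hW
      intro j _ hj
      rw [Finsupp.notMem_support_iff.1 hj]
      simp
    rw [he]
    apply Finset.prod_le_prod
    · intro j _; positivity
    · intro j _
      exact_mod_cast Nat.factorial_le_pow (u j)
  have hclaimA : ∏ j ∈ u.support, ((n : ℝ) / u j) ^ u j
      ≤ Real.exp 1 ^ n * (Nat.multinomial W u : ℝ) := by
    have hmn : (0:ℝ) ≤ Real.exp 1 ^ n * (Nat.multinomial W u : ℝ) := by positivity
    rw [← mul_le_mul_iff_of_pos_right hP, hAP]
    calc (n : ℝ) ^ n ≤ Real.exp 1 ^ n * (n.factorial : ℝ) := pow_self_le n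
      _ = Real.exp 1 ^ n * ((Nat.multinomial W u : ℝ) * ∏ j ∈ W, ((u j).factorial : ℝ)) := by
          rw [← hfact]
      _ ≤ (Real.exp 1 ^ n * (Nat.multinomial W u : ℝ))
            * (∏ j ∈ u.support, ((u j : ℝ)) ^ u j) := by
          rw [mul_assoc]
          apply mul_le_mul_of_nonneg_left _ (by positivity)
          exact mul_le_mul_of_nonneg_left hfacP (by positivity)
  have hinner : ∏ j ∈ u.support, ((2 * (n : ℝ)) * d j / u j) ^ u j
      ≤ (Nat.multinomial W u : ℝ) * ∏ j ∈ u.support, ((2 * Real.exp 1) * d j) ^ u j := by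
    have hsplit : ∏ j ∈ u.support, ((2 * (n : ℝ)) * d j / u j) ^ u j
        = (∏ j ∈ u.support, ((n : ℝ) / u j) ^ u j)
          * ∏ j ∈ u.support, (2 * d j) ^ u j := by
      rw [← Finset.prod_mul_distrib]
      refine Finset.prod_congr rfl fun j hj => ?_
      rw [← mul_pow]
      congr 1
      ring
    rw [hsplit]
    have h2d : (0:ℝ) ≤ ∏ j ∈ u.support, (2 * d j) ^ u j :=
      Finset.prod_nonneg fun j _ => pow_nonneg (by linarith [hd j]) _
    calc (∏ j ∈ u.support, ((n : ℝ) / u j) ^ u j) * ∏ j ∈ u.support, (2 * d j) ^ u j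
        ≤ (Real.exp 1 ^ n * (Nat.multinomial W u : ℝ)) * ∏ j ∈ u.support, (2 * d j) ^ u j :=
          mul_le_mul_of_nonneg_right hclaimA h2d
      _ = (Nat.multinomial W u : ℝ) * ∏ j ∈ u.support, ((2 * Real.exp 1) * d j) ^ u j := by
          have he : Real.exp 1 ^ n = ∏ j ∈ u.support, Real.exp 1 ^ u j := by
            rw [Finset.prod_pow_eq_pow_sum]
            congr 1
          rw [he, mul_comm (∏ j ∈ u.support, Real.exp 1 ^ u j) _, mul_assoc,
            ← Finset.prod_mul_distrib]
          congr 1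
          refine Finset.prod_congr rfl fun j _ => ?_
          rw [← mul_pow]
          congr 1
          ring
  -- step 2 : apply the p-th power
  have hinnern : (0:ℝ) ≤ ∏ j ∈ u.support, ((2 * (n : ℝ)) * d j / u j) ^ u j :=
    Finset.prod_nonneg fun j _ => pow_nonneg
      (div_nonneg (mul_nonneg (by positivity) (hd j)) (Nat.cast_nonneg _)) _
  have hmul1 : (0:ℝ) ≤ (Nat.multinomial W u : ℝ) := Nat.cast_nonneg _
  have hprod2e : (0:ℝ) ≤ ∏ j ∈ u.support, ((2 * Real.exp 1) * d j) ^ u j :=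
    Finset.prod_nonneg fun j _ => pow_nonneg (mul_nonneg (by positivity) (hd j)) _
  calc (∏ j ∈ u.support, ((2 * (deg u : ℝ)) * d j / u j) ^ u j) ^ p
      ≤ ((Nat.multinomial W u : ℝ) * ∏ j ∈ u.support, ((2 * Real.exp 1) * d j) ^ u j) ^ p :=
        Real.rpow_le_rpow hinnern hinner hp0.le
    _ = (Nat.multinomial W u : ℝ) ^ p
          * (∏ j ∈ u.support, ((2 * Real.exp 1) * d j) ^ u j) ^ p := by
        rw [Real.mul_rpow hmul1 hprod2e]
    _ ≤ (Nat.multinomial W u : ℝ) * ∏ j ∈ u.support, (((2 * Real.exp 1) * d j) ^ p) ^ u j := by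
        apply mul_le_mul
        · have h1 : (1:ℝ) ≤ (Nat.multinomial W u : ℝ) :=
            Nat.one_le_cast.2 (Nat.multinomial_pos W u)
          calc (Nat.multinomial W u : ℝ) ^ p ≤ (Nat.multinomial W u : ℝ) ^ (1:ℝ) :=
              Real.rpow_le_rpow_of_exponent_le h1 hp1
            _ = _ := Real.rpow_one _
        · rw [← Real.finset_prod_rpow _ _
            (fun j _ => pow_nonneg (mul_nonneg (by positivity) (hd j)) _) p]
          apply le_of_eq
          refine Finset.prod_congr rfl fun j _ => ?_
          exact npow_rpow _ (mul_nonneg (by positivity) (hd j)) _ _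
        · exact Real.rpow_nonneg hprod2e p
        · exact hmul1
    _ ≤ (Nat.multinomial W u : ℝ) * ∏ j ∈ W, (((2 * Real.exp 1) * d j) ^ p) ^ u j := by
        apply mul_le_mul_of_nonneg_left _ hmul1
        apply le_of_eq
        apply Finset.prod_subset hW
        intro j _ hj
        rw [Finsupp.notMem_support_iff.1 hj]
        simp

lemma partC (p : ℝ) (hp0 : 0 < p) (hp1 : p ≤ 1) (d : ℕ → ℝ) (hd : ∀ j, 0 ≤ d j)
    (T : Finset (ℕ →₀ ℕ))
    (hsum : ∀ W : Finset ℕ, (∀ j ∈ W, ∃ u ∈ T, j ∈ u.support) →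
      ∑ j ∈ W, ((2 * Real.exp 1) * d j) ^ p ≤ 1 / 2) :
    ∑ u ∈ T, (∏ j ∈ u.support, ((2 * (deg u : ℝ)) * d j / u j) ^ u j) ^ p ≤ 2 := by
  classical
  set W := T.sup Finsupp.support with hW
  set c : ℕ → ℝ := fun j => ((2 * Real.exp 1) * d j) ^ p with hc
  have hc0 : ∀ j, 0 ≤ c j := fun j =>
    Real.rpow_nonneg (mul_nonneg (by positivity) (hd j)) _
  have hWc : ∑ j ∈ W, c j ≤ 1 / 2 := by
    apply hsum
    intro j hj
    exact Finset.mem_sup.1 hj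
  have hWc0 : 0 ≤ ∑ j ∈ W, c j := Finset.sum_nonneg fun j _ => hc0 j
  have step1 : ∑ u ∈ T, (∏ j ∈ u.support, ((2 * (deg u : ℝ)) * d j / u j) ^ u j) ^ p
      ≤ ∑ u ∈ T, (Nat.multinomial W u : ℝ) * ∏ j ∈ W, c j ^ u j := by
    apply Finset.sum_le_sum
    intro u hu
    exact Gc_le_mult p hp0 hp1 d hd u W (Finset.le_sup hu)
  refine step1.trans ?_
  set N := T.sup deg with hN
  have step2 : ∑ u ∈ T, (Nat.multinomial W u : ℝ) * ∏ j ∈ W, c j ^ u j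
      = ∑ n ∈ range (N + 1), ∑ u ∈ T.filter (fun u => deg u = n),
          (Nat.multinomial W u : ℝ) * ∏ j ∈ W, c j ^ u j := by
    rw [Finset.sum_fiberwise_of_maps_to]
    intro u hu
    exact Finset.mem_range.2 (Nat.lt_succ_of_le (Finset.le_sup hu))
  rw [step2]
  have step3 : ∀ n, ∑ u ∈ T.filter (fun u => deg u = n),
      (Nat.multinomial W u : ℝ) * ∏ j ∈ W, c j ^ u j ≤ (1/2 : ℝ) ^ n := by
    intro n
    have hterm : (0:ℝ) ≤ (1:ℝ) := zero_le_one
    set cf : (ℕ →₀ ℕ) → (ℕ → ℕ) := fun u => ⇑u with hcf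
    have hinj : Set.InjOn cf (T.filter (fun u => deg u = n)) :=
      fun x _ y _ h => DFunLike.coe_injective h
    have himg : ∑ u ∈ T.filter (fun u => deg u = n),
        (Nat.multinomial W u : ℝ) * ∏ j ∈ W, c j ^ u j
        = ∑ k ∈ (T.filter (fun u => deg u = n)).image cf,
            (Nat.multinomial W k : ℝ) * ∏ j ∈ W, c j ^ k j := by
      rw [Finset.sum_image hinj]
    rw [himg]
    have hsub : (T.filter (fun u => deg u = n)).image cf
        ⊆ Finset.piAntidiag W n := by
      intro k hk
      simp only [Finset.mem_image, Finset.mem_filter] at hk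
      obtain ⟨u, ⟨huT, hdeg⟩, rfl⟩ := hk
      rw [Finset.mem_piAntidiag]
      constructor
      · rw [← deg_eq_sum_subset (Finset.le_sup huT : u.support ⊆ W), hdeg]
      · intro j hj
        exact (Finset.le_sup huT : u.support ⊆ W) (Finsupp.mem_support_iff.2 hj)
    calc _ ≤ ∑ k ∈ Finset.piAntidiag W n, (Nat.multinomial W k : ℝ) * ∏ j ∈ W, c j ^ k j := by
          apply Finset.sum_le_sum_of_subset_of_nonneg hsub
          intro k _ _
          exact mul_nonneg (Nat.cast_nonneg _)
            (Finset.prod_nonneg fun j _ => pow_nonneg (hc0 j) _)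
      _ = (∑ j ∈ W, c j) ^ n := (Finset.sum_pow_eq_sum_piAntidiag W c n).symm
      _ ≤ (1/2 : ℝ) ^ n := pow_le_pow_left₀ hWc0 hWc n
  calc ∑ n ∈ range (N + 1), ∑ u ∈ T.filter (fun u => deg u = n),
        (Nat.multinomial W u : ℝ) * ∏ j ∈ W, c j ^ u j
      ≤ ∑ n ∈ range (N + 1), (1/2 : ℝ) ^ n := Finset.sum_le_sum fun n _ => step3 n
    _ ≤ (1 - 1/2 : ℝ)⁻¹ := geom_le _ (by norm_num) (by norm_num) _
    _ = 2 := by norm_num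



lemma deg_def (t : ℕ →₀ ℕ) : deg t = ∑ j ∈ t.support, t j := rfl

end St14


open St14 in
/-- `ℓ_p`-summability of the weight sequence `(σ̃_s⁻¹)_{s∈F}` built from the
splitting of `ℕ` into `E = {j < j₀}` and `F = {j ≥ j₀}`: here `ψn j = ‖ψ_j‖_{W^{1,∞}}`,
`d_j = (4e^q/r)ψn j`, `|s_F| = Σ_{j ≥ j₀} s_j`, and
`σ̃_s⁻¹ = (Π_{j<j₀} ((λ+1)/(2λ))^{s_j}) · Π_{j≥j₀} (|s_F| d_j / s_j)^{s_j}`. -/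
theorem stmt14 (p q r lam : ℝ) (hp0 : 0 < p) (hp1 : p ≤ 1) (hq : 1 < q) (hr : 0 < r)
    (hlam : 1 < lam) (j0 : ℕ)
    (ψn : ℕ → ℝ) (hψn : ∀ j, 0 ≤ ψn j)
    (hψp : Summable fun j => ψn j ^ p)
    (hE : (lam - 1) * ∑ j ∈ Finset.range j0, ψn j ≤ r / 6)
    (hF : (∑' j : {j : ℕ // j0 ≤ j}, ψn j) ≤ r / (12 * Real.exp q)) :
    Summable fun s : ℕ →₀ ℕ =>
      ((∏ j ∈ s.support.filter (· < j0), ((lam + 1) / (2 * lam)) ^ s j) *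
        ∏ j ∈ s.support.filter (j0 ≤ ·),
          (((∑ i ∈ s.support.filter (j0 ≤ ·), s i : ℕ) : ℝ) *
              (4 * Real.exp q / r * ψn j) / (s j : ℝ)) ^ s j) ^ p := by
  classical
  set θ : ℝ := (lam + 1) / (2 * lam) with hθdef
  have hθ0 : 0 < θ := div_pos (by linarith) (by linarith)
  have hθ1 : θ < 1 := by
    rw [hθdef, div_lt_one (by linarith)]; linarith
  set d : ℕ → ℝ := fun j => 4 * Real.exp q / r * ψn j with hddef
  have hd0 : ∀ j, 0 ≤ d j := fun j => mul_nonneg (by positivity) (hψn j)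
  -- summability of ψn itself
  have hψ_sum : Summable ψn := by
    have h1 : ∀ᶠ j in Filter.atTop, ψn j ^ p < 1 :=
      (tendsto_order.1 hψp.tendsto_atTop_zero).2 1 one_pos
    obtain ⟨N, hN⟩ := Filter.eventually_atTop.1 h1
    have key : ∀ j, N ≤ j → ψn j ≤ ψn j ^ p := by
      intro j hj
      rcases eq_or_lt_of_le (hψn j) with h0 | h0
      · rw [← h0]; exact Real.rpow_nonneg le_rfl p
      · have hlt1 : ψn j < 1 := by
          by_contra hcon
          push_neg at hcon
          have h2 : (1:ℝ) ≤ ψn j ^ p := by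
            calc (1:ℝ) = (1:ℝ) ^ p := (Real.one_rpow p).symm
              _ ≤ ψn j ^ p := Real.rpow_le_rpow zero_le_one hcon hp0.le
          linarith [hN j hj]
        calc ψn j = ψn j ^ (1:ℝ) := (Real.rpow_one _).symm
          _ ≤ ψn j ^ p := Real.rpow_le_rpow_of_exponent_ge h0 hlt1.le hp1
    refine (summable_nat_add_iff N).1 ?_
    refine Summable.of_nonneg_of_le (fun j => hψn _) (fun j => key (j + N) (Nat.le_add_left N j))
      ((summable_nat_add_iff N).2 hψp)
  -- finite tail sums of ψn
  have htail : ∀ W : Finset ℕ, (∀ j ∈ W, j0 ≤ j) →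
      ∑ j ∈ W, ψn j ≤ r / (12 * Real.exp q) := by
    intro W hW
    have h1 : ∑ j ∈ W, ψn j = ∑ x ∈ W.subtype (fun j => j0 ≤ j), ψn ↑x := by
      rw [Finset.sum_subtype_eq_sum_filter, Finset.filter_true_of_mem hW]
    rw [h1]
    refine le_trans (Summable.sum_le_tsum _ (fun i _ => hψn _) ?_) hF
    exact hψ_sum.subtype {j | j0 ≤ j}
  have hdsum : ∀ W : Finset ℕ, (∀ j ∈ W, j0 ≤ j) → ∑ j ∈ W, 2 * d j ≤ 2 / 3 := by
    intro W hW
    have h1 : ∑ j ∈ W, 2 * d j = 8 * Real.exp q / r * ∑ j ∈ W, ψn j := by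
      rw [Finset.mul_sum]
      refine Finset.sum_congr rfl fun j _ => ?_
      rw [hddef]; ring
    rw [h1]
    calc 8 * Real.exp q / r * ∑ j ∈ W, ψn j
        ≤ 8 * Real.exp q / r * (r / (12 * Real.exp q)) :=
          mul_le_mul_of_nonneg_left (htail W hW) (by positivity)
      _ = 2 / 3 := by
          field_simp
          ring
  -- the ℓ^p tail sequence
  set c : ℕ → ℝ := fun j => ((2 * Real.exp 1) * d j) ^ p with hcdef
  have hc0 : ∀ j, 0 ≤ c j := fun j =>
    Real.rpow_nonneg (mul_nonneg (by positivity) (hd0 j)) p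
  have hc_sum : Summable c := by
    have hK : (0:ℝ) ≤ 8 * Real.exp 1 * Real.exp q / r := by positivity
    have h1 : ∀ j, c j = (8 * Real.exp 1 * Real.exp q / r) ^ p * ψn j ^ p := by
      intro j
      have h2 : (2 * Real.exp 1) * d j = (8 * Real.exp 1 * Real.exp q / r) * ψn j := by
        rw [hddef]; ring
      rw [hcdef]
      show ((2 * Real.exp 1) * d j) ^ p = _
      rw [h2, Real.mul_rpow hK (hψn j)]
    exact Summable.congr (hψp.mul_left _) (fun j => (h1 j).symm)
  obtain ⟨E1, hE1⟩ : ∃ E1 : Finset ℕ, (∑' j : {x // x ∉ E1}, c ↑j) < 1 / 2 :=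
    ((tendsto_order.1 (tendsto_tsum_compl_atTop_zero c)).2 (1/2) (by norm_num)).exists
  have hcW : ∀ W : Finset ℕ, (∀ j ∈ W, j ∉ E1) → ∑ j ∈ W, c j ≤ 1 / 2 := by
    intro W hW
    have h1 : ∑ j ∈ W, c j = ∑ x ∈ W.subtype (fun j => j ∉ E1), c ↑x := by
      rw [Finset.sum_subtype_eq_sum_filter, Finset.filter_true_of_mem hW]
    rw [h1]
    refine le_trans (Summable.sum_le_tsum _ (fun i _ => hc0 _) ?_) hE1.le
    exact hc_sum.subtype {x | x ∉ E1}
  -- projections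
  set p0 : ℕ → Prop := fun j => j < j0 with hp0def
  set pt : ℕ → Prop := fun j => j0 ≤ j with hptdef
  set p1 : ℕ → Prop := fun j => j ∈ E1 with hp1def
  set e0 : (ℕ →₀ ℕ) → (ℕ →₀ ℕ) := fun s => s.filter p0 with he0def
  set et : (ℕ →₀ ℕ) → (ℕ →₀ ℕ) := fun s => s.filter pt with hetdef
  set e1 : (ℕ →₀ ℕ) → (ℕ →₀ ℕ) := fun s => (et s).filter p1 with he1def
  set e2 : (ℕ →₀ ℕ) → (ℕ →₀ ℕ) := fun s => (et s).filter (fun j => ¬ p1 j) with he2def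
  set κA : ℝ := θ ^ p with hκAdef
  set κB : ℝ := ((2:ℝ)/3) ^ p with hκBdef
  have hκA0 : 0 ≤ κA := Real.rpow_nonneg hθ0.le p
  have hκA1 : κA < 1 := Real.rpow_lt_one hθ0.le hθ1 hp0
  have hκB0 : 0 ≤ κB := Real.rpow_nonneg (by norm_num) p
  have hκB1 : κB < 1 := Real.rpow_lt_one (by norm_num) (by norm_num) hp0
  set Gc : (ℕ →₀ ℕ) → ℝ :=
    fun v => ∏ j ∈ v.support, ((2 * (deg v : ℝ)) * d j / v j) ^ v j with hGcdef
  have hGc0 : ∀ v, 0 ≤ Gc v := fun v =>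
    Finset.prod_nonneg fun j _ => pow_nonneg
      (div_nonneg (mul_nonneg (by positivity) (hd0 j)) (Nat.cast_nonneg _)) _
  set G0 : (ℕ →₀ ℕ) → ℝ :=
    fun u => ∏ j ∈ u.support, ((deg u : ℝ) * d j / u j) ^ u j with hG0def
  have hG00 : ∀ u, 0 ≤ G0 u := fun u =>
    Finset.prod_nonneg fun j _ => pow_nonneg
      (div_nonneg (mul_nonneg (Nat.cast_nonneg _) (hd0 j)) (Nat.cast_nonneg _)) _
  -- support facts for filters
  have hsuppf : ∀ (P : ℕ → Prop) [DecidablePred P] (s : ℕ →₀ ℕ),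
      (s.filter P).support = s.support.filter P := by
    intro P hP s
    simp [Finsupp.support_filter]
  have happf : ∀ (P : ℕ → Prop) [DecidablePred P] (s : ℕ →₀ ℕ) (j : ℕ),
      j ∈ (s.filter P).support → (s.filter P) j = s j := by
    intro P hP s j hj
    rw [hsuppf P s, Finset.mem_filter] at hj
    exact Finsupp.filter_apply_pos _ _ hj.2
  -- decomposition of the summand
  set F : (ℕ →₀ ℕ) → ℝ := fun s =>
      ((∏ j ∈ s.support.filter (· < j0), θ ^ s j) *
        ∏ j ∈ s.support.filter (j0 ≤ ·),
          (((∑ i ∈ s.support.filter (j0 ≤ ·), s i : ℕ) : ℝ) *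
              (4 * Real.exp q / r * ψn j) / (s j : ℝ)) ^ s j) with hFdef
  have hdeg_eq : ∀ s : ℕ →₀ ℕ,
      (∑ i ∈ s.support.filter (j0 ≤ ·), s i) = deg (et s) := by
    intro s
    rw [deg]
    rw [hsuppf pt s]
    refine (Finset.sum_congr rfl fun j hj => ?_).symm
    exact happf pt s j (by rwa [hsuppf pt s])
  have hFeq : ∀ s : ℕ →₀ ℕ, F s = θ ^ deg (e0 s) * G0 (et s) := by
    intro s
    have h1 : (e0 s).support = s.support.filter (fun x => x < j0) := hsuppf p0 s
    have h2 : (et s).support = s.support.filter (fun x => j0 ≤ x) := hsuppf pt s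
    have h3 : ∀ j ∈ (et s).support, (et s) j = s j := fun j hj => happf pt s j hj
    have h4 : ∀ j ∈ (e0 s).support, (e0 s) j = s j := fun j hj => happf p0 s j hj
    show (∏ j ∈ s.support.filter (· < j0), θ ^ s j) *
        ∏ j ∈ s.support.filter (j0 ≤ ·),
          (((∑ i ∈ s.support.filter (j0 ≤ ·), s i : ℕ) : ℝ) *
              (4 * Real.exp q / r * ψn j) / (s j : ℝ)) ^ s j
        = θ ^ deg (e0 s) *
          ∏ j ∈ (et s).support, ((deg (et s) : ℝ) * d j / ((et s) j)) ^ ((et s) j)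
    congr 1
    · rw [deg_def, ← Finset.prod_pow_eq_pow_sum]
      exact Finset.prod_congr h1.symm (fun j hj => by rw [h4 j hj])
    · rw [hdeg_eq s]
      refine Finset.prod_congr h2.symm (fun j hj => ?_)
      rw [h3 j hj]
  -- pointwise bound
  have hpt_bound : ∀ s : ℕ →₀ ℕ,
      F s ^ p ≤ κA ^ deg (e0 s) * (Gc (e1 s) ^ p * Gc (e2 s) ^ p) := by
    intro s
    rw [hFeq s, Real.mul_rpow (pow_nonneg hθ0.le _) (hG00 _), hκAdef,
      ← npow_rpow θ hθ0.le (deg (e0 s)) p]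
    apply mul_le_mul_of_nonneg_left _ (Real.rpow_nonneg (pow_nonneg hθ0.le _) p)
    have hsplit : G0 (et s) ≤ Gc (e1 s) * Gc (e2 s) := by
      rw [hG0def, hGcdef, he1def, he2def]
      exact split_le d hd0 p1 (et s)
    calc G0 (et s) ^ p ≤ (Gc (e1 s) * Gc (e2 s)) ^ p :=
        Real.rpow_le_rpow (hG00 _) hsplit hp0.le
      _ = Gc (e1 s) ^ p * Gc (e2 s) ^ p := Real.mul_rpow (hGc0 _) (hGc0 _)
  -- the global bound over an arbitrary finite set
  apply summable_of_sum_le (c := (1 - κA)⁻¹ ^ j0 * ((1 - κB)⁻¹ ^ E1.card * 2))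
  · intro s
    apply Real.rpow_nonneg
    apply mul_nonneg
    · exact Finset.prod_nonneg fun j _ => pow_nonneg hθ0.le _
    · exact Finset.prod_nonneg fun j _ => pow_nonneg
        (div_nonneg (mul_nonneg (Nat.cast_nonneg _)
          (mul_nonneg (by positivity) (hψn j))) (Nat.cast_nonneg _)) _
  intro S
  have hstep1 : ∑ s ∈ S,
      ((∏ j ∈ s.support.filter (· < j0), θ ^ s j) *
        ∏ j ∈ s.support.filter (j0 ≤ ·),
          (((∑ i ∈ s.support.filter (j0 ≤ ·), s i : ℕ) : ℝ) *
              (4 * Real.exp q / r * ψn j) / (s j : ℝ)) ^ s j) ^ p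
      ≤ ∑ s ∈ S, κA ^ deg (e0 s) * (Gc (e1 s) ^ p * Gc (e2 s) ^ p) :=
    Finset.sum_le_sum fun s _ => hpt_bound s
  refine hstep1.trans ?_
  -- split the sum into a product of three sums
  have hrec : ∀ s : ℕ →₀ ℕ, e0 s + (e1 s + e2 s) = s := by
    intro s
    have h1 : e1 s + e2 s = et s := Finsupp.filter_pos_add_filter_neg (et s) p1
    rw [h1]
    have h2 : et s = s.filter (fun j => ¬ p0 j) := by
      ext j
      rw [hetdef]
      simp only [Finsupp.filter_apply]
      exact if_congr (not_lt).symm rfl rfl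
    rw [h2, he0def]
    exact Finsupp.filter_pos_add_filter_neg s p0
  have hinj : ∀ s ∈ S, ∀ s' ∈ S, e0 s = e0 s' → (e1 s, e2 s) = (e1 s', e2 s') → s = s' := by
    intro s _ s' _ h1 h2
    have h3 := congrArg Prod.fst h2
    have h4 := congrArg Prod.snd h2
    simp only [] at h3 h4
    rw [← hrec s, ← hrec s', h1, h3, h4]
  have hmain := sum_le_mul S e0 (fun s => (e1 s, e2 s))
    (fun t => κA ^ deg t) (fun y => Gc y.1 ^ p * Gc y.2 ^ p)
    (fun t => pow_nonneg hκA0 _)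
    (fun y => mul_nonneg (Real.rpow_nonneg (hGc0 _) p) (Real.rpow_nonneg (hGc0 _) p))
    hinj
  refine hmain.trans ?_
  have hA : ∑ t ∈ S.image e0, κA ^ deg t ≤ (1 - κA)⁻¹ ^ j0 := by
    have := box κA hκA0 hκA1 (Finset.range j0) (S.image e0) ?_
    · simpa using this
    · intro t ht
      simp only [Finset.mem_image] at ht
      obtain ⟨s, _, rfl⟩ := ht
      intro j hj
      rw [he0def] at hj
      rw [hsuppf p0 s, Finset.mem_filter] at hj
      exact Finset.mem_range.2 hj.2
  have hBC : ∑ y ∈ S.image (fun s => (e1 s, e2 s)), Gc y.1 ^ p * Gc y.2 ^ p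
      ≤ (1 - κB)⁻¹ ^ E1.card * 2 := by
    set S' := S.image (fun s => (e1 s, e2 s)) with hS'def
    have hmain2 := sum_le_mul S' Prod.fst Prod.snd
      (fun v => Gc v ^ p) (fun w => Gc w ^ p)
      (fun v => Real.rpow_nonneg (hGc0 _) p) (fun w => Real.rpow_nonneg (hGc0 _) p)
      (fun y _ y' _ h1 h2 => Prod.ext h1 h2)
    refine hmain2.trans ?_
    have hB : ∑ v ∈ S'.image Prod.fst, Gc v ^ p ≤ (1 - κB)⁻¹ ^ E1.card := by
      have hsup : ∀ v ∈ S'.image Prod.fst, v.support ⊆ E1 := by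
        intro v hv
        simp only [hS'def, Finset.mem_image] at hv
        obtain ⟨y, hy, rfl⟩ := hv
        obtain ⟨s, _, rfl⟩ := hy
        intro j hj
        rw [he1def, hsuppf p1 (et s), Finset.mem_filter] at hj
        exact hj.2
      have htailsup : ∀ v ∈ S'.image Prod.fst, ∀ j ∈ v.support, j0 ≤ j := by
        intro v hv
        simp only [hS'def, Finset.mem_image] at hv
        obtain ⟨y, hy, rfl⟩ := hv
        obtain ⟨s, _, rfl⟩ := hy
        intro j hj
        rw [he1def, hsuppf p1 (et s), Finset.mem_filter] at hj
        have hj2 := hj.1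
        rw [hetdef, hsuppf pt s, Finset.mem_filter] at hj2
        exact hj2.2
      have hpw : ∀ v ∈ S'.image Prod.fst, Gc v ^ p ≤ κB ^ deg v := by
        intro v hv
        have h1 : Gc v ≤ ((2:ℝ)/3) ^ deg v := by
          refine (Gc_le d hd0 v).trans ?_
          exact pow_le_pow_left₀ (Finset.sum_nonneg fun j _ => by
            have := hd0 j; linarith)
            (hdsum v.support (htailsup v hv)) _
        calc Gc v ^ p ≤ (((2:ℝ)/3) ^ deg v) ^ p :=
            Real.rpow_le_rpow (hGc0 v) h1 hp0.le
          _ = κB ^ deg v := by rw [hκBdef, npow_rpow _ (by norm_num)]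
      calc ∑ v ∈ S'.image Prod.fst, Gc v ^ p
          ≤ ∑ v ∈ S'.image Prod.fst, κB ^ deg v := Finset.sum_le_sum hpw
        _ ≤ (1 - κB)⁻¹ ^ E1.card := box κB hκB0 hκB1 E1 _ hsup
    have hC : ∑ w ∈ S'.image Prod.snd, Gc w ^ p ≤ 2 := by
      have hw : ∀ w ∈ S'.image Prod.snd, ∀ j ∈ w.support, j ∉ E1 := by
        intro w hw
        simp only [hS'def, Finset.mem_image] at hw
        obtain ⟨y, hy, rfl⟩ := hw
        obtain ⟨s, _, rfl⟩ := hy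
        intro j hj
        rw [he2def, hsuppf _ (et s), Finset.mem_filter] at hj
        exact hj.2
      rw [hGcdef]
      apply partC p hp0 hp1 d hd0
      intro W hWmem
      apply hcW
      intro j hj
      obtain ⟨u, hu, hju⟩ := hWmem j hj
      exact hw u hu j hju
    exact mul_le_mul hB hC (Finset.sum_nonneg fun w _ => Real.rpow_nonneg (hGc0 _) p)
      (pow_nonneg (inv_nonneg.2 (by linarith)) _)
  exact mul_le_mul hA hBC (Finset.sum_nonneg fun y _ =>
      mul_nonneg (Real.rpow_nonneg (hGc0 _) p) (Real.rpow_nonneg (hGc0 _) p))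
    (pow_nonneg (inv_nonneg.2 (by linarith)) _)
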